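/- Let d ≥ 2 and let 𝒜 be an irreducible set of real orthogonal d×d matrices. Then 𝒜 has no invariant cone: there is no proper cone K ⊆ ℝ^d with A K ⊆ K for every A ∈ 𝒜. -/

import Mathlib

open Matrix

open scoped Classical

/-- A complex number `μ` is an eigenvalue of the complex matrix `M`. -/
def IsEigenvalueC {n : Type*} [Fintype n] (M : Matrix n n ℂ) (μ : ℂ) : Prop :=
  ∃ v : n → ℂ, v ≠ 0 ∧ M.mulVec v = μ • v

/-- The spectral radius of a real matrix: the maximum of the moduli of the complex
eigenvalues of its complexification. -/
noncomputable def spectralRadius' {n : Type*} [Fintype n] (A : Matrix n n ℝ) : ℝ :=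
  sSup {r : ℝ | ∃ μ : ℂ, IsEigenvalueC (A.map (fun x : ℝ => (x : ℂ))) μ ∧ r = ‖μ‖}

/-- `A` has a Perron eigenvalue: its spectral radius is a nonnegative eigenvalue of `A`. -/
def HasPerronEigenvalue {n : Type*} [Fintype n] (A : Matrix n n ℝ) : Prop :=
  0 ≤ spectralRadius' A ∧ ∃ v : n → ℝ, v ≠ 0 ∧ A.mulVec v = spectralRadius' A • v

/-- The expansion index of a real matrix: the sum, over all (complex) leading eigenvalues
(those of modulus equal to the spectral radius), of their geometric multiplicities. -/
noncomputable def expansionIndex {n : Type*} [Fintype n] [DecidableEq n]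
    (A : Matrix n n ℝ) : ℕ :=
  ∑ μ ∈ (((A.map (fun x : ℝ => (x : ℂ))).charpoly.roots.toFinset).filter
      (fun μ => ‖μ‖ = spectralRadius' A)),
    Module.finrank ℂ
      (LinearMap.ker (Matrix.toLin' ((A.map (fun x : ℝ => (x : ℂ))) - μ • (1 : Matrix n n ℂ))))

/-- A (multiplicative) semigroup of matrices: a nonempty set closed under multiplication. -/
def IsMatrixSemigroup {n : Type*} [Fintype n] (S : Set (Matrix n n ℝ)) : Prop :=
  S.Nonempty ∧ ∀ A ∈ S, ∀ B ∈ S, A * B ∈ S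

/-- An irreducible set of matrices: no common invariant subspace other than `{0}` and the
whole space. -/
def MatIrreducible {n : Type*} [Fintype n] (S : Set (Matrix n n ℝ)) : Prop :=
  ¬ ∃ V : Submodule ℝ (n → ℝ), V ≠ ⊥ ∧ V ≠ ⊤ ∧ ∀ A ∈ S, ∀ x ∈ V, A.mulVec x ∈ V

/-- A proper cone: a closed convex cone with nonempty interior which is pointed. -/
def IsProperCone {n : Type*} [Fintype n] (K : Set (n → ℝ)) : Prop :=
  IsClosed K ∧ (∀ x ∈ K, ∀ y ∈ K, x + y ∈ K) ∧
    (∀ t : ℝ, 0 ≤ t → ∀ x ∈ K, t • x ∈ K) ∧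
    (interior K).Nonempty ∧ (∀ x ∈ K, -x ∈ K → x = 0)

section AuxLemmas


variable {d : ℕ}

lemma qd_continuous : Continuous (fun x : Fin d → ℝ => x ⬝ᵥ x) := by
  unfold dotProduct
  exact continuous_finset_sum _ fun i _ => (continuous_apply i).mul (continuous_apply i)

lemma qd_nonneg (x : Fin d → ℝ) : 0 ≤ x ⬝ᵥ x :=
  Finset.sum_nonneg fun i _ => mul_self_nonneg _

/-- Carathéodory padding: every point of the convex hull of a nonempty set in a
finite-dimensional space is a convex combination of `n` points, for `n ≥ finrank + 1`. -/
lemma mem_convexHull_padded {E : Type} [AddCommGroup E] [Module ℝ E] [FiniteDimensional ℝ E]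
    {s : Set E} (hs : s.Nonempty) {n : ℕ} (hn : Module.finrank ℝ E + 1 ≤ n)
    {x : E} (hx : x ∈ convexHull ℝ s) :
    ∃ (w : Fin n → ℝ) (z : Fin n → E),
      (∀ i, 0 ≤ w i) ∧ ∑ i, w i = 1 ∧ (∀ i, z i ∈ s) ∧ ∑ i, w i • z i = x := by
  classical
  obtain ⟨d₀, hd₀⟩ := hs
  obtain ⟨ι, hfin, z, w, hrange, hindep, hpos, hsum, hrep⟩ :=
    eq_pos_convex_span_of_mem_convexHull hx
  have hcard : Fintype.card ι ≤ n := by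
    refine le_trans (le_trans hindep.card_le_finrank_succ ?_) hn
    exact Nat.add_le_add_right (Submodule.finrank_le _) 1
  obtain ⟨e⟩ : Nonempty (ι ↪ Fin n) := by
    refine Function.Embedding.nonempty_of_card_le ?_
    simpa using hcard
  set w' : Fin n → ℝ := fun j => if h : ∃ i, e i = j then w h.choose else 0 with hw'
  set z' : Fin n → E := fun j => if h : ∃ i, e i = j then z h.choose else d₀ with hz'
  have hchoose : ∀ i : ι, (⟨i, rfl⟩ : ∃ i', e i' = e i).choose = i := by
    intro i
    exact e.injective (⟨i, rfl⟩ : ∃ i', e i' = e i).choose_spec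
  have hw'e : ∀ i : ι, w' (e i) = w i := by
    intro i
    have h : ∃ i', e i' = e i := ⟨i, rfl⟩
    simp only [hw', dif_pos h]
    exact congrArg w (e.injective h.choose_spec)
  have hz'e : ∀ i : ι, z' (e i) = z i := by
    intro i
    have h : ∃ i', e i' = e i := ⟨i, rfl⟩
    simp only [hz', dif_pos h]
    exact congrArg z (e.injective h.choose_spec)
  have himage : ∀ {M : Type} [AddCommMonoid M] (f : Fin n → M), (∀ j, ¬(∃ i, e i = j) → f j = 0) →
      ∑ j, f j = ∑ i, f (e i) := by
    intro M _ f hf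
    have h1 : ∑ i : ι, f (e i) = ∑ j ∈ Finset.univ.image e, f j :=
      (Finset.sum_image (fun i _ j _ h => e.injective h)).symm
    rw [h1]
    refine (Finset.sum_subset (Finset.subset_univ _) ?_).symm
    intro j _ hj
    refine hf j ?_
    rintro ⟨i, hi⟩
    exact hj (Finset.mem_image.mpr ⟨i, Finset.mem_univ i, hi⟩)
  refine ⟨w', z', ?_, ?_, ?_, ?_⟩
  · intro j
    by_cases h : ∃ i, e i = j
    · simp only [hw', dif_pos h]; exact (hpos _).le
    · simp only [hw', dif_neg h]; exact le_refl 0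
  · have h0 : ∀ j, ¬(∃ i, e i = j) → w' j = 0 := by
      intro j hj
      simp only [hw', dif_neg hj]
    rw [himage w' h0, ← hsum]
    exact Finset.sum_congr rfl fun i _ => hw'e i
  · intro j
    by_cases h : ∃ i, e i = j
    · simp only [hz', dif_pos h]; exact hrange ⟨_, rfl⟩
    · simp only [hz', dif_neg h]; exact hd₀
  · have h0 : ∀ j, ¬(∃ i, e i = j) → w' j • z' j = 0 := by
      intro j hj
      simp only [hw', dif_neg hj, zero_smul]
    rw [himage _ h0]
    rw [← hrep]
    refine Finset.sum_congr rfl fun i _ => ?_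
    rw [hw'e, hz'e]

end AuxLemmas

/-- An irreducible set of orthogonal matrices (`d ≥ 2`) has no invariant
proper cone. -/
theorem irreducible_orthogonal_no_invariant_cone
    {d : ℕ} (hd : 2 ≤ d) (𝒜 : Set (Matrix (Fin d) (Fin d) ℝ))
    (horth : ∀ A ∈ 𝒜, Aᵀ * A = 1)
    (hirr : MatIrreducible 𝒜) :
    ¬ ∃ K : Set (Fin d → ℝ), IsProperCone K ∧ ∀ A ∈ 𝒜, ∀ x ∈ K, A.mulVec x ∈ K := by
  classical
  rintro ⟨K, ⟨hKcl, hKadd, hKsmul, hKint, hKpt⟩, hKinv⟩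
  -- orthogonal matrices preserve the dot product
  have hdot : ∀ A ∈ 𝒜, ∀ x y : Fin d → ℝ, (A *ᵥ x) ⬝ᵥ (A *ᵥ y) = x ⬝ᵥ y := by
    intro A hA x y
    rw [Matrix.dotProduct_mulVec, ← Matrix.mulVec_transpose, Matrix.mulVec_mulVec,
      horth A hA, Matrix.one_mulVec]
  -- a nonzero element of K
  obtain ⟨x₀, hx₀⟩ := hKint
  obtain ⟨x₁, hx₁K, hx₁ne⟩ : ∃ x₁ ∈ K, x₁ ≠ 0 := by
    by_cases h : x₀ = 0
    · obtain ⟨ε, hε, hball⟩ := Metric.mem_nhds_iff.mp (isOpen_interior.mem_nhds hx₀)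
      have hd0 : (0 : ℕ) < d := by omega
      set e₀ : Fin d → ℝ := Pi.single (⟨0, hd0⟩ : Fin d) 1 with he₀
      set u : Fin d → ℝ := (ε/2) • e₀ with hu
      have hnorm : ‖u‖ ≤ ε/2 := by
        rw [hu, norm_smul]
        have h1 : ‖e₀‖ ≤ 1 := by
          rw [pi_norm_le_iff_of_nonneg zero_le_one]
          intro i
          rw [he₀]
          by_cases hi : i = ⟨0, hd0⟩
          · rw [hi, Pi.single_eq_same]; simp
          · rw [Pi.single_eq_of_ne hi]; simp
        calc ‖ε/2‖ * ‖e₀‖ ≤ ‖ε/2‖ * 1 := by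
              exact mul_le_mul_of_nonneg_left h1 (norm_nonneg _)
          _ = ε/2 := by rw [mul_one, Real.norm_eq_abs, abs_of_pos (by linarith)]
      have huK : u ∈ K := by
        refine interior_subset (hball ?_)
        rw [Metric.mem_ball, dist_eq_norm, h, sub_zero]
        linarith
      refine ⟨u, huK, ?_⟩
      intro hu0
      have h1 : u ⟨0, hd0⟩ = ε/2 := by
        rw [hu, Pi.smul_apply, he₀, Pi.single_eq_same, smul_eq_mul, mul_one]
      rw [hu0] at h1
      simp at h1
      linarith
    · exact ⟨x₀, interior_subset hx₀, h⟩
  -- a "unit" vector in K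
  have hq1pos : 0 < x₁ ⬝ᵥ x₁ :=
    lt_of_le_of_ne (qd_nonneg x₁) (fun h => hx₁ne (dotProduct_self_eq_zero.mp h.symm))
  set u₀ : Fin d → ℝ := (Real.sqrt (x₁ ⬝ᵥ x₁))⁻¹ • x₁ with hu₀
  have hu₀K : u₀ ∈ K := hKsmul _ (inv_nonneg.mpr (Real.sqrt_nonneg _)) x₁ hx₁K
  have hqu₀ : u₀ ⬝ᵥ u₀ = 1 := by
    rw [hu₀, smul_dotProduct, dotProduct_smul, smul_eq_mul, smul_eq_mul]
    rw [← mul_assoc, ← mul_inv]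
    rw [Real.mul_self_sqrt hq1pos.le]
    exact inv_mul_cancel₀ hq1pos.ne'
  -- the compact "spherical base" of the cone
  set D : Set (Fin d → ℝ) := K ∩ (fun x => x ⬝ᵥ x) ⁻¹' {1} with hD
  have hu₀D : u₀ ∈ D := ⟨hu₀K, hqu₀⟩
  have hDco : IsCompact D := by
    refine Metric.isCompact_of_isClosed_isBounded
      (hKcl.inter (isClosed_singleton.preimage qd_continuous)) ?_
    refine (Metric.isBounded_closedBall (x := (0 : Fin d → ℝ)) (r := 1)).subset ?_
    intro x hx
    rw [Metric.mem_closedBall, dist_zero_right]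
    rw [pi_norm_le_iff_of_nonneg zero_le_one]
    intro i
    rw [Real.norm_eq_abs, abs_le_one_iff_mul_self_le_one]
    have h1 : x ⬝ᵥ x = 1 := hx.2
    rw [← h1]
    exact Finset.single_le_sum (fun j _ => mul_self_nonneg (x j)) (Finset.mem_univ i)
  have hDinv : ∀ A ∈ 𝒜, ∀ x ∈ D, A *ᵥ x ∈ D := by
    intro A hA x hx
    exact ⟨hKinv A hA x hx.1, by
      have : (A *ᵥ x) ⬝ᵥ (A *ᵥ x) = x ⬝ᵥ x := hdot A hA x x
      simpa [this] using hx.2⟩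
  -- the compact superset of the convex hull via Carathéodory
  set Q : Set (Fin d → ℝ) := {x | ∃ w : Fin (d+1) → ℝ, ∃ z : Fin (d+1) → (Fin d → ℝ),
      (∀ i, 0 ≤ w i) ∧ ∑ i, w i = 1 ∧ (∀ i, z i ∈ D) ∧ ∑ i, w i • z i = x} with hQ
  have hQco : IsCompact Q := by
    have himg : Q = (fun p : (Fin (d+1) → ℝ) × (Fin (d+1) → Fin d → ℝ) => ∑ i, p.1 i • p.2 i) ''
        (stdSimplex ℝ (Fin (d+1)) ×ˢ Set.univ.pi fun _ => D) := by
      ext y; constructor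
      · rintro ⟨w, z, h1, h2, h3, h4⟩
        exact ⟨(w, z), ⟨⟨h1, h2⟩, fun i _ => h3 i⟩, h4⟩
      · rintro ⟨⟨w, z⟩, ⟨⟨h1, h2⟩, h3⟩, h4⟩
        exact ⟨w, z, h1, h2, fun i => h3 i (Set.mem_univ i), h4⟩
    rw [himg]
    refine (IsCompact.prod (isCompact_stdSimplex _ _) (isCompact_univ_pi fun _ => hDco)).image ?_
    exact continuous_finset_sum _ fun i _ =>
      ((continuous_apply i).comp continuous_fst).smul ((continuous_apply i).comp continuous_snd)
  have h0K : (0 : Fin d → ℝ) ∈ K := by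
    have := hKsmul 0 le_rfl x₁ hx₁K
    simpa using this
  have h0Q : (0 : Fin d → ℝ) ∉ Q := by
    rintro ⟨w, z, hw, hsum, hz, hzero⟩
    obtain ⟨i₀, hi₀⟩ : ∃ i, w i ≠ 0 := by
      by_contra hall
      push_neg at hall
      simp [hall] at hsum
    have hterm : ∀ i, w i • z i ∈ K := fun i => hKsmul _ (hw i) _ (hz i).1
    have hrest : -(w i₀ • z i₀) ∈ K := by
      have hsplit : w i₀ • z i₀ + ∑ i ∈ Finset.univ.erase i₀, w i • z i = 0 := by
        rw [Finset.add_sum_erase Finset.univ (fun i => w i • z i) (Finset.mem_univ i₀)]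
        exact hzero
      have heq : ∑ i ∈ Finset.univ.erase i₀, w i • z i = -(w i₀ • z i₀) :=
        eq_neg_of_add_eq_zero_right hsplit
      rw [← heq]
      exact Finset.sum_induction _ (· ∈ K) (fun a b ha hb => hKadd a ha b hb) h0K
        (fun i _ => hterm i)
    have hz0 : w i₀ • z i₀ = 0 := hKpt _ (hterm i₀) hrest
    rcases smul_eq_zero.mp hz0 with h | h
    · exact hi₀ h
    · have h1 : z i₀ ⬝ᵥ z i₀ = 1 := (hz i₀).2
      rw [h] at h1
      simp [zero_dotProduct] at h1
  -- the compact convex set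
  set C : Set (Fin d → ℝ) := closure (convexHull ℝ D) with hC
  have hCQ : C ⊆ Q := by
    refine closure_minimal ?_ hQco.isClosed
    intro y hy
    obtain ⟨w, z, h1, h2, h3, h4⟩ := mem_convexHull_padded ⟨u₀, hu₀D⟩
      (by rw [Module.finrank_fin_fun]) hy
    exact ⟨w, z, h1, h2, h3, h4⟩
  have hCco : IsCompact C := hQco.of_isClosed_subset isClosed_closure hCQ
  have hCconv : Convex ℝ C := (convex_convexHull ℝ D).closure
  have hCne : C.Nonempty := ⟨u₀, subset_closure (subset_convexHull ℝ D hu₀D)⟩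
  obtain ⟨c, hcC, hcmin⟩ := hCco.exists_isMinOn hCne (qd_continuous.continuousOn)
  have hcne : c ≠ 0 := fun h => h0Q (hCQ (h ▸ hcC))
  have hCinv : ∀ A ∈ 𝒜, ∀ x ∈ C, A *ᵥ x ∈ C := by
    intro A hA x hx
    have h1 : A.mulVecLin '' (convexHull ℝ D) ⊆ convexHull ℝ D := by
      rw [A.mulVecLin.image_convexHull]
      refine convexHull_mono ?_
      rintro y ⟨x', hx', rfl⟩
      exact hDinv A hA x' hx'
    have h2 : A.mulVecLin x ∈ closure (A.mulVecLin '' (convexHull ℝ D)) :=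
      image_closure_subset_closure_image A.mulVecLin.continuous_of_finiteDimensional ⟨x, hx, rfl⟩
    exact closure_mono h1 h2
  -- the minimizer is a common fixed point
  have hfix : ∀ A ∈ 𝒜, A *ᵥ c = c := by
    intro A hA
    set c' : Fin d → ℝ := A *ᵥ c with hc'
    have hc'C : c' ∈ C := hCinv A hA c hcC
    have hqc' : c' ⬝ᵥ c' = c ⬝ᵥ c := hdot A hA c c
    have hmid : (1/2 : ℝ) • c + (1/2 : ℝ) • c' ∈ C :=
      hCconv hcC hc'C (by norm_num) (by norm_num) (by norm_num)
    have h1 : c ⬝ᵥ c ≤ ((1/2:ℝ) • c + (1/2:ℝ) • c') ⬝ᵥ ((1/2:ℝ) • c + (1/2:ℝ) • c') :=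
      isMinOn_iff.mp hcmin _ hmid
    have hexp : ((1/2:ℝ) • c + (1/2:ℝ) • c') ⬝ᵥ ((1/2:ℝ) • c + (1/2:ℝ) • c') =
        (1/4)*(c ⬝ᵥ c) + (1/2)*(c ⬝ᵥ c') + (1/4)*(c' ⬝ᵥ c') := by
      simp only [add_dotProduct, dotProduct_add, smul_dotProduct,
        dotProduct_smul, smul_eq_mul, dotProduct_comm c' c]
      ring
    have hsub : (c - c') ⬝ᵥ (c - c') = (c ⬝ᵥ c) - 2*(c ⬝ᵥ c') + (c' ⬝ᵥ c') := by
      rw [sub_dotProduct, dotProduct_sub, dotProduct_sub,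
        dotProduct_comm c' c]
      ring
    have hnn : 0 ≤ (c - c') ⬝ᵥ (c - c') := qd_nonneg _
    have hzero : (c - c') ⬝ᵥ (c - c') = 0 := by nlinarith
    have := dotProduct_self_eq_zero.mp hzero
    exact (sub_eq_zero.mp this).symm
  -- contradiction with irreducibility
  apply hirr
  refine ⟨Submodule.span ℝ {c}, ?_, ?_, ?_⟩
  · simpa [Submodule.span_singleton_eq_bot] using hcne
  · intro htop
    have h1 : Module.finrank ℝ (Submodule.span ℝ {c}) = 1 := finrank_span_singleton hcne
    rw [htop, finrank_top, Module.finrank_fin_fun] at h1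
    omega
  · intro A hA x hx
    obtain ⟨a, rfl⟩ := Submodule.mem_span_singleton.mp hx
    rw [Matrix.mulVec_smul, hfix A hA]
    exact Submodule.smul_mem _ a (Submodule.mem_span_singleton_self c)
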